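/- Let Π = Π(ρ, F) be the transition matrix of the network formation game on S = (E → Bool). If π : S → ℝ satisfies π g ≥ 0 for all g, ∑_{g ∈ S} π g = 1, and ∑_{g ∈ S} π g * Π g w = π w for every w ∈ S (i.e. π is a stationary distribution), then π g > 0 for every g ∈ S: the stationary distribution puts positive mass on every network configuration. -/
import Mathlib


open Matrix Finset Filter

/-- Flip the link `e` in network `g`. -/
def flipL {E : Type*} [DecidableEq E] (e : E) (g : E → Bool) : E → Bool :=
  Function.update g e (!(g e))

/-- The one-step transition matrix of the network formation game. -/
noncomputable def netPi {E : Type*} [DecidableEq E] [Fintype E]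
    (ρ : E → (E → Bool) → ℝ) (F : (E → Bool) → E → ℝ) :
    Matrix (E → Bool) (E → Bool) ℝ :=
  Matrix.of fun g w =>
    if g = w then ∑ e, ρ e g * (1 - F g e)
    else ∑ e, if w = flipL e g then ρ e g * F g e else 0

/-- A meeting function: strictly positive selection probabilities summing to one. -/
def IsMeeting {E : Type*} [Fintype E] (ρ : E → (E → Bool) → ℝ) : Prop :=
  (∀ e g, 0 < ρ e g) ∧ ∀ g, ∑ e, ρ e g = 1

/-- An acceptance function: probabilities strictly between 0 and 1, complementary under flips. -/
def IsAcceptance {E : Type*} [DecidableEq E] (F : (E → Bool) → E → ℝ) : Prop :=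
  (∀ g e, 0 < F g e ∧ F g e < 1) ∧ ∀ g e, F g e + F (flipL e g) e = 1


lemma netPi_nonneg {E : Type*} [DecidableEq E] [Fintype E]
    (ρ : E → (E → Bool) → ℝ) (F : (E → Bool) → E → ℝ)
    (hρ : IsMeeting ρ) (hF : IsAcceptance F) (g w : E → Bool) :
    0 ≤ netPi ρ F g w := by
  unfold netPi
  simp only [Matrix.of_apply]
  split
  · exact Finset.sum_nonneg fun e _ => mul_nonneg (hρ.1 e g).le
      (by linarith [(hF.1 g e).2])
  · refine Finset.sum_nonneg fun e _ => ?_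
    split
    · exact mul_nonneg (hρ.1 e g).le (hF.1 g e).1.le
    · exact le_refl 0

lemma flipL_ne {E : Type*} [DecidableEq E] (e : E) (g : E → Bool) :
    g ≠ flipL e g := by
  intro h
  have := congrFun h e
  simp [flipL] at this

lemma netPi_flip_pos {E : Type*} [DecidableEq E] [Fintype E]
    (ρ : E → (E → Bool) → ℝ) (F : (E → Bool) → E → ℝ)
    (hρ : IsMeeting ρ) (hF : IsAcceptance F) (g : E → Bool) (e : E) :
    0 < netPi ρ F g (flipL e g) := by
  unfold netPi
  simp only [Matrix.of_apply, if_neg (flipL_ne e g)]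
  have h1 : ∀ e' ∈ Finset.univ, (0:ℝ) ≤
      if flipL e g = flipL e' g then ρ e' g * F g e' else 0 := by
    intro e' _
    split
    · exact mul_nonneg (hρ.1 e' g).le (hF.1 g e').1.le
    · exact le_refl 0
  have h2 : (0:ℝ) < if flipL e g = flipL e g then ρ e g * F g e else 0 := by
    simp only [if_pos rfl]
    exact mul_pos (hρ.1 e g) (hF.1 g e).1
  exact lt_of_lt_of_le h2 (Finset.single_le_sum h1 (Finset.mem_univ e))

/-- Any stationary distribution of the network formation game puts strictly positive
mass on every network configuration. -/
theorem stationary_pos {E : Type*} [DecidableEq E] [Fintype E] [Nonempty E]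
    (ρ : E → (E → Bool) → ℝ) (F : (E → Bool) → E → ℝ)
    (hρ : IsMeeting ρ) (hF : IsAcceptance F)
    (π : (E → Bool) → ℝ) (hπnonneg : ∀ g, 0 ≤ π g) (hπsum : ∑ g, π g = 1)
    (hπstat : ∀ w, ∑ g, π g * netPi ρ F g w = π w) :
    ∀ g : E → Bool, 0 < π g := by
  intro g0
  have key : ∀ g, 0 < π g → ∀ e, 0 < π (flipL e g) := by
    intro g hg e
    rw [← hπstat (flipL e g)]
    have h1 : ∀ h ∈ Finset.univ, (0:ℝ) ≤ π h * netPi ρ F h (flipL e g) :=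
      fun h _ => mul_nonneg (hπnonneg h) (netPi_nonneg ρ F hρ hF h _)
    have h2 : 0 < π g * netPi ρ F g (flipL e g) :=
      mul_pos hg (netPi_flip_pos ρ F hρ hF g e)
    exact lt_of_lt_of_le h2 (Finset.single_le_sum h1 (Finset.mem_univ g))
  obtain ⟨g1, hg1⟩ : ∃ g, 0 < π g := by
    by_contra h
    push_neg at h
    have : ∀ g, π g = 0 := fun g => le_antisymm (h g) (hπnonneg g)
    simp [this] at hπsum
  suffices H : ∀ n : ℕ, ∀ w : E → Bool,
      (Finset.univ.filter (fun e => g1 e ≠ w e)).card = n → 0 < π w by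
    exact H _ g0 rfl
  intro n
  induction n with
  | zero =>
    intro w hw
    have : g1 = w := by
      funext e
      by_contra he
      have : e ∈ Finset.univ.filter (fun e => g1 e ≠ w e) := by
        simp [he]
      rw [Finset.card_eq_zero] at hw
      simp [hw] at this
    exact this ▸ hg1
  | succ n ih =>
    intro w hw
    have hne : (Finset.univ.filter (fun e => g1 e ≠ w e)).Nonempty := by
      rw [← Finset.card_pos, hw]; omega
    obtain ⟨e, he⟩ := hne
    simp only [Finset.mem_filter] at he
    set w' := flipL e w with hw'
    have hflip : flipL e w' = w := by
      funext e'
      by_cases h : e' = e <;> simp [flipL, Function.update, hw', h]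
    have hcard : (Finset.univ.filter (fun e' => g1 e' ≠ w' e')).card = n := by
      have heq : Finset.univ.filter (fun e' => g1 e' ≠ w' e')
          = (Finset.univ.filter (fun e' => g1 e' ≠ w e')).erase e := by
        ext e'
        by_cases h : e' = e
        · subst h
          simp only [Finset.mem_filter, Finset.mem_erase, Finset.mem_univ,
            true_and, hw', flipL, Function.update_self]
          cases hb : w e' <;> cases hb2 : g1 e' <;> simp_all
        · simp [Finset.mem_erase, h, hw', flipL, Function.update_of_ne h]
      rw [heq, Finset.card_erase_of_mem (by simp [he.2]), hw]
      omega
    exact hflip ▸ key w' (ih w' hcard) e
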